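/- Let α ∈ (0,1), c > 0, κ > 0. Then the function K_α is continuous on ℝ, and for every ξ ≤ 0 one has K_α(ξ) = -(cκ)^α K₀(ξ) = -(cκ)^α e^{κξ}/(2κ). -/

import Mathlib

open Real MeasureTheory Filter Topology

/-- The kernel K₀(ξ) = e^{-κ|ξ|}/(2κ). -/
noncomputable def K0 (κ ξ : ℝ) : ℝ := Real.exp (-κ * |ξ|) / (2 * κ)

/-- The (a.e.) derivative of K₀: K₀'(x) = -sign(x) e^{-κ|x|}/2. -/
noncomputable def K0d (κ x : ℝ) : ℝ := -Real.sign x * Real.exp (-κ * |x|) / 2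

/-- The kernel K_α(ξ) = -(c^α/Γ(1-α)) ∫₀^∞ K₀'(ξ-s) s^{-α} ds. -/
noncomputable def Kalpha (α c κ ξ : ℝ) : ℝ :=
  -(c ^ α / Real.Gamma (1 - α)) * ∫ s in Set.Ioi (0 : ℝ), K0d κ (ξ - s) / s ^ α

/-- Convolution (K * g)(ξ) = ∫ K(ξ-y) g(y) dy. -/
noncomputable def conv (K g : ℝ → ℝ) (ξ : ℝ) : ℝ := ∫ y, K (ξ - y) * g y

lemma measurable_realSign : Measurable Real.sign := by
  unfold Real.sign
  exact Measurable.ite (measurableSet_lt measurable_id measurable_const) measurable_const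
    (Measurable.ite (measurableSet_lt measurable_const measurable_id) measurable_const
      measurable_const)

lemma measurable_K0d (κ : ℝ) : Measurable (K0d κ) := by
  unfold K0d
  apply Measurable.div_const
  apply Measurable.mul
  · exact measurable_realSign.neg
  · fun_prop

lemma abs_K0d_le (κ x : ℝ) : |K0d κ x| ≤ Real.exp (-κ * |x|) / 2 := by
  unfold K0d
  rw [abs_div, abs_mul, abs_neg, abs_two, abs_of_pos (Real.exp_pos _)]
  have h1 : |Real.sign x| ≤ 1 := by
    rcases Real.sign_apply_eq x with h | h | h <;> rw [h] <;> norm_num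
  have h2 := (Real.exp_pos (-κ * |x|)).le
  nlinarith [abs_nonneg (Real.sign x)]

lemma continuousAt_K0d (κ : ℝ) {x : ℝ} (hx : x ≠ 0) : ContinuousAt (K0d κ) x := by
  have hc : ContinuousAt (fun y => -Real.sign x * Real.exp (-κ * |y|) / 2) x := by
    fun_prop
  apply hc.congr
  rcases hx.lt_or_gt with h | h
  · filter_upwards [eventually_lt_nhds h] with y hy
    unfold K0d; rw [Real.sign_of_neg hy, Real.sign_of_neg h]
  · filter_upwards [eventually_gt_nhds h] with y hy
    unfold K0d; rw [Real.sign_of_pos hy, Real.sign_of_pos h]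

lemma bound_integrable {α κ : ℝ} (hα : α ∈ Set.Ioo (0 : ℝ) 1) (hκ : 0 < κ) (C : ℝ) :
    IntegrableOn (fun s : ℝ => C * (s ^ (-α) * Real.exp (-(κ * s)))) (Set.Ioi 0) := by
  have h := integrableOn_rpow_mul_exp_neg_mul_rpow (p := 1) (s := -α) (b := κ)
    (by linarith [hα.2]) one_pos hκ
  have h' : IntegrableOn (fun s : ℝ => s ^ (-α) * Real.exp (-(κ * s))) (Set.Ioi 0) := by
    refine h.congr_fun (fun x _ => ?_) measurableSet_Ioi
    beta_reduce
    rw [Real.rpow_one, neg_mul]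
  exact h'.const_mul C

lemma key_bound {α κ : ℝ} (hκ : 0 < κ) (b ξ : ℝ) (hξ : ξ ≤ b) {s : ℝ} (hs : s ∈ Set.Ioi (0:ℝ)) :
    ‖K0d κ (ξ - s) / s ^ α‖ ≤ (Real.exp (κ * b) / 2) * (s ^ (-α) * Real.exp (-(κ * s))) := by
  have hs0 : (0:ℝ) < s := hs
  have hsp : (0:ℝ) < s ^ α := Real.rpow_pos_of_pos hs0 α
  have habs : s - b ≤ |ξ - s| := by
    have : s - ξ ≤ |ξ - s| := by rw [abs_sub_comm]; exact le_abs_self _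
    linarith
  have hexp : Real.exp (-κ * |ξ - s|) ≤ Real.exp (κ * b) * Real.exp (-(κ * s)) := by
    rw [← Real.exp_add]
    apply Real.exp_le_exp.mpr
    nlinarith
  calc ‖K0d κ (ξ - s) / s ^ α‖ = |K0d κ (ξ - s)| / s ^ α := by
        rw [Real.norm_eq_abs, abs_div, abs_of_pos hsp]
    _ ≤ (Real.exp (-κ * |ξ - s|) / 2) / s ^ α := by
        gcongr; exact abs_K0d_le κ _
    _ ≤ ((Real.exp (κ * b) * Real.exp (-(κ * s))) / 2) / s ^ α := by gcongr
    _ = (Real.exp (κ * b) / 2) * (s ^ (-α) * Real.exp (-(κ * s))) := by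
        rw [Real.rpow_neg hs0.le]
        field_simp

/-- `K_α` is continuous, and for ξ ≤ 0 one has `K_α(ξ) = -(cκ)^α K₀(ξ) = -(cκ)^α e^{κξ}/(2κ)`. -/
theorem Kalpha_continuous_and_neg_side
    (α c κ : ℝ) (hα : α ∈ Set.Ioo (0 : ℝ) 1) (hc : 0 < c) (hκ : 0 < κ) :
    Continuous (Kalpha α c κ) ∧
    ∀ ξ ≤ (0 : ℝ), Kalpha α c κ ξ = -(c * κ) ^ α * K0 κ ξ ∧
      Kalpha α c κ ξ = -(c * κ) ^ α * Real.exp (κ * ξ) / (2 * κ) := by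
  constructor
  · -- Continuity
    unfold Kalpha
    apply continuous_const.mul
    rw [continuous_iff_continuousAt]
    intro ξ₀
    apply continuousAt_of_dominated (bound := fun s =>
        (Real.exp (κ * (ξ₀ + 1)) / 2) * (s ^ (-α) * Real.exp (-(κ * s))))
    · filter_upwards with ξ
      exact (((measurable_K0d κ).comp ((measurable_const.sub measurable_id))).div
        (measurable_id.pow_const α)).aestronglyMeasurable
    · filter_upwards [eventually_lt_nhds (lt_add_one ξ₀)] with ξ hξ
      rw [ae_restrict_iff' measurableSet_Ioi]
      filter_upwards with s hs
      exact key_bound hκ (ξ₀ + 1) ξ hξ.le hs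
    · exact bound_integrable hα hκ _
    · have h : ∀ᵐ s : ℝ, s ≠ ξ₀ := by
        rw [ae_iff]
        simp only [not_not]
        simp [Real.volume_singleton (a := ξ₀)]
      filter_upwards [ae_restrict_of_ae h] with s hs
      have : ξ₀ - s ≠ 0 := sub_ne_zero.mpr (Ne.symm hs)
      have hf : ContinuousAt (fun x : ℝ => x - s) ξ₀ := continuousAt_id.sub continuousAt_const
      have hcc : ContinuousAt (fun x : ℝ => K0d κ (x - s)) ξ₀ :=
        ContinuousAt.comp (g := K0d κ) (continuousAt_K0d κ this) hf
      exact hcc.div_const _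
  · -- Value for ξ ≤ 0
    intro ξ hξ
    have hΓpos : 0 < Real.Gamma (1 - α) := Real.Gamma_pos_of_pos (by linarith [hα.2])
    have hint : (∫ s in Set.Ioi (0 : ℝ), K0d κ (ξ - s) / s ^ α)
        = (Real.exp (κ * ξ) / 2) * ((1 / κ) ^ (1 - α) * Real.Gamma (1 - α)) := by
      rw [show (∫ s in Set.Ioi (0 : ℝ), K0d κ (ξ - s) / s ^ α)
          = ∫ s in Set.Ioi (0 : ℝ), (Real.exp (κ * ξ) / 2) * (s ^ ((1 - α) - 1) * Real.exp (-(κ * s)))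
          from ?_]
      · rw [MeasureTheory.integral_const_mul,
          Real.integral_rpow_mul_exp_neg_mul_Ioi (by linarith [hα.2]) hκ]
      · apply setIntegral_congr_fun measurableSet_Ioi
        intro s hs
        beta_reduce
        have hs0 : (0:ℝ) < s := hs
        have hneg : ξ - s < 0 := by linarith
        have habs : |ξ - s| = s - ξ := by rw [abs_of_neg hneg]; ring
        unfold K0d
        rw [Real.sign_of_neg hneg, habs]
        have h1 : Real.exp (-κ * (s - ξ)) = Real.exp (κ * ξ) * Real.exp (-(κ * s)) := by
          rw [← Real.exp_add]; ring_nf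
        rw [h1]
        have hsp : (0:ℝ) < s ^ α := Real.rpow_pos_of_pos hs0 α
        rw [show ((1:ℝ) - α) - 1 = -α by ring, Real.rpow_neg hs0.le]
        field_simp
    have hmain : Kalpha α c κ ξ = -(c * κ) ^ α * Real.exp (κ * ξ) / (2 * κ) := by
      unfold Kalpha
      rw [hint]
      have hck : (c * κ) ^ α = c ^ α * κ ^ α := Real.mul_rpow hc.le hκ.le
      have h1κ : ((1:ℝ) / κ) ^ (1 - α) = κ ^ (α - 1) := by
        rw [one_div, Real.inv_rpow hκ.le, ← Real.rpow_neg hκ.le]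
        congr 1
        ring
      rw [hck, h1κ]
      have hκα : κ ^ (α - 1) = κ ^ α / κ := by
        rw [Real.rpow_sub hκ, Real.rpow_one]
      rw [hκα]
      field_simp
    refine ⟨?_, hmain⟩
    rw [hmain]
    unfold K0
    rw [abs_of_nonpos hξ]
    have : -κ * -ξ = κ * ξ := by ring
    rw [this]
    ring
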